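/- Let L be the graph Laplacian of a connected undirected weighted graph on N nodes (with positive edge weights), let h₁,…,h_N ∈ ℝ^m span ℝ^m, and define H̃ = diag(h₁h₁ᵀ, …, h_N h_Nᵀ) ∈ ℝ^{Nm×Nm}. Then the matrix P = L⊗I_m + H̃ is positive definite. -/

import Mathlib

open Matrix
open scoped Kronecker

private lemma lap_quad (N : ℕ) (w : Fin N → Fin N → ℝ)
    (hsymm : ∀ i j, w i j = w j i) (hdiag : ∀ i, w i i = 0)
    (L : Matrix (Fin N) (Fin N) ℝ)
    (hL : ∀ i j, L i j = if i = j then ∑ k, w i k else -(w i j))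
    (s : Fin N → ℝ) :
    ∑ i, ∑ j, L i j * (s i * s j) = (1/2) * ∑ i, ∑ j, w i j * (s i - s j)^2 := by
  have hL' : ∀ i j, L i j = (if i = j then ∑ k, w i k else 0) - w i j := by
    intro i j
    rw [hL]
    by_cases hij : i = j
    · subst hij; simp [hdiag]
    · simp [hij]
  have hswap : ∑ i, ∑ j, w i j * (s j * s j) = ∑ i, ∑ j, w i j * (s i * s i) := by
    rw [Finset.sum_comm]
    exact Finset.sum_congr rfl fun j _ => Finset.sum_congr rfl fun i _ => by rw [hsymm]
  have hdiagterm : ∑ i, ∑ j, (if i = j then (∑ k, w i k) else 0) * (s i * s j)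
      = ∑ i, ∑ j, w i j * (s i * s i) := by
    refine Finset.sum_congr rfl fun i _ => ?_
    simp only [ite_mul, zero_mul]
    rw [Finset.sum_ite_eq]
    simp [Finset.sum_mul]
  have lhs_eq : ∑ i, ∑ j, L i j * (s i * s j)
      = (∑ i, ∑ j, w i j * (s i * s i)) - ∑ i, ∑ j, w i j * (s i * s j) := by
    calc ∑ i, ∑ j, L i j * (s i * s j)
        = ∑ i, ∑ j, ((if i = j then (∑ k, w i k) else 0) * (s i * s j)
            - w i j * (s i * s j)) := by
          refine Finset.sum_congr rfl fun i _ => Finset.sum_congr rfl fun j _ => ?_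
          rw [hL', sub_mul]
      _ = (∑ i, ∑ j, (if i = j then (∑ k, w i k) else 0) * (s i * s j))
            - ∑ i, ∑ j, w i j * (s i * s j) := by
          simp_rw [Finset.sum_sub_distrib]
      _ = (∑ i, ∑ j, w i j * (s i * s i)) - ∑ i, ∑ j, w i j * (s i * s j) := by
          rw [hdiagterm]
  have rhs_eq : (1/2) * ∑ i, ∑ j, w i j * (s i - s j)^2
      = (∑ i, ∑ j, w i j * (s i * s i)) - ∑ i, ∑ j, w i j * (s i * s j) := by
    have expand : ∑ i, ∑ j, w i j * (s i - s j)^2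
        = (∑ i, ∑ j, w i j * (s i * s i)) - 2 * (∑ i, ∑ j, w i j * (s i * s j))
          + ∑ i, ∑ j, w i j * (s j * s j) := by
      simp_rw [Finset.mul_sum]
      rw [← Finset.sum_sub_distrib, ← Finset.sum_add_distrib]
      refine Finset.sum_congr rfl fun i _ => ?_
      rw [← Finset.sum_sub_distrib, ← Finset.sum_add_distrib]
      refine Finset.sum_congr rfl fun j _ => by ring
    rw [expand, hswap]
    ring
  rw [lhs_eq, rhs_eq]

/-- If `L` is the Laplacian of a connected undirected weighted graph on `N`
nodes and the vectors `h₁, …, h_N` span `ℝ^m`, then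
`P = L ⊗ I_m + diag(h₁h₁ᵀ, …, h_N h_Nᵀ)` is positive definite. -/
theorem laplacian_plus_blockdiag_posDef
    (N m : ℕ)
    (w : Fin N → Fin N → ℝ)
    (hsymm : ∀ i j, w i j = w j i)
    (hnonneg : ∀ i j, 0 ≤ w i j)
    (hdiag : ∀ i, w i i = 0)
    (G : SimpleGraph (Fin N))
    (hG : ∀ i j, G.Adj i j ↔ i ≠ j ∧ 0 < w i j)
    (hconn : G.Connected)
    (L : Matrix (Fin N) (Fin N) ℝ)
    (hL : ∀ i j, L i j = if i = j then ∑ k, w i k else -(w i j))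
    (h : Fin N → (Fin m → ℝ))
    (hspan : Submodule.span ℝ (Set.range h) = ⊤)
    (Htilde : Matrix (Fin N × Fin m) (Fin N × Fin m) ℝ)
    (hHtilde : ∀ p q, Htilde p q = if p.1 = q.1 then h p.1 p.2 * h p.1 q.2 else 0) :
    (L ⊗ₖ (1 : Matrix (Fin m) (Fin m) ℝ) + Htilde).PosDef := by
  have hLsym : ∀ i j, L i j = L j i := by
    intro i j
    rw [hL, hL]
    by_cases hij : i = j
    · subst hij; rfl
    · simp [hij, Ne.symm hij, hsymm]
  rw [posDef_iff_dotProduct_mulVec]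
  constructor
  · -- Hermitian
    ext ⟨i, a⟩ ⟨j, b⟩
    simp only [conjTranspose_apply, Matrix.add_apply, kroneckerMap_apply, star_trivial,
      hHtilde, one_apply]
    rw [hLsym]
    by_cases hij : i = j
    · subst hij
      by_cases hab : a = b
      · subst hab; rfl
      · simp [hab, Ne.symm hab, mul_comm]
    · have hji : ¬ j = i := fun e => hij e.symm
      by_cases hab : a = b
      · simp [hij, hji, hab]
      · simp [hij, hji, hab, Ne.symm hab]
  · intro x hx
    -- key quadratic form identity
    have key : (star x) ⬝ᵥ ((L ⊗ₖ (1 : Matrix (Fin m) (Fin m) ℝ) + Htilde) *ᵥ x)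
        = (∑ a : Fin m, (1/2) * ∑ i, ∑ j, w i j * (x (i,a) - x (j,a))^2)
          + ∑ i : Fin N, (∑ a, h i a * x (i,a))^2 := by
      have e1 : (star x) ⬝ᵥ ((L ⊗ₖ (1 : Matrix (Fin m) (Fin m) ℝ) + Htilde) *ᵥ x)
          = (∑ i, ∑ a : Fin m, x (i,a) * ∑ j, L i j * x (j,a))
            + ∑ i, ∑ a : Fin m, x (i,a) * (h i a * ∑ b, h i b * x (i,b)) := by
        simp only [dotProduct, mulVec, Matrix.add_apply, kroneckerMap_apply, star_trivial,
          Pi.star_apply, hHtilde, add_mul, mul_add, Finset.sum_add_distrib]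
        congr 1
        · rw [Fintype.sum_prod_type]
          refine Finset.sum_congr rfl fun i _ => Finset.sum_congr rfl fun a _ => ?_
          congr 1
          rw [Fintype.sum_prod_type]
          refine Finset.sum_congr rfl fun j _ => ?_
          simp only [one_apply, mul_ite, mul_one, mul_zero, ite_mul, zero_mul]
          rw [Finset.sum_ite_eq]
          simp
        · rw [Fintype.sum_prod_type]
          refine Finset.sum_congr rfl fun i _ => Finset.sum_congr rfl fun a _ => ?_
          congr 1
          rw [Fintype.sum_prod_type]
          rw [Finset.sum_eq_single i]
          · simp [Finset.mul_sum, mul_assoc]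
          · intro j _ hj
            simp [Ne.symm hj]
          · simp
      rw [e1]
      congr 1
      · -- Laplacian part
        rw [Finset.sum_comm]
        refine Finset.sum_congr rfl fun a _ => ?_
        rw [← lap_quad N w hsymm hdiag L hL (fun i => x (i,a))]
        refine Finset.sum_congr rfl fun i _ => ?_
        rw [Finset.mul_sum]
        refine Finset.sum_congr rfl fun j _ => by ring
      · -- block diagonal part
        refine Finset.sum_congr rfl fun i _ => ?_
        rw [pow_two, Finset.sum_mul]
        refine Finset.sum_congr rfl fun a _ => by ring
    rw [key]
    -- nonnegativity of each piece
    have h1nonneg : ∀ a : Fin m,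
        0 ≤ (1/2) * ∑ i, ∑ j, w i j * (x (i,a) - x (j,a))^2 := by
      intro a
      have : 0 ≤ ∑ i, ∑ j, w i j * (x (i,a) - x (j,a))^2 :=
        Finset.sum_nonneg fun i _ => Finset.sum_nonneg fun j _ =>
          mul_nonneg (hnonneg i j) (sq_nonneg _)
      linarith
    have h2nonneg : ∀ i : Fin N, (0:ℝ) ≤ (∑ a, h i a * x (i,a))^2 := fun i => sq_nonneg _
    by_contra hle
    push_neg at hle
    have hQ0 : (∑ a : Fin m, (1/2) * ∑ i, ∑ j, w i j * (x (i,a) - x (j,a))^2)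
          + ∑ i : Fin N, (∑ a, h i a * x (i,a))^2 = 0 := by
      have hs1 : 0 ≤ ∑ a : Fin m, (1/2) * ∑ i, ∑ j, w i j * (x (i,a) - x (j,a))^2 :=
        Finset.sum_nonneg fun a _ => h1nonneg a
      have hs2 : 0 ≤ ∑ i : Fin N, (∑ a, h i a * x (i,a))^2 :=
        Finset.sum_nonneg fun i _ => h2nonneg i
      linarith
    have hs1 : 0 ≤ ∑ a : Fin m, (1/2) * ∑ i, ∑ j, w i j * (x (i,a) - x (j,a))^2 :=
      Finset.sum_nonneg fun a _ => h1nonneg a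
    have hs2 : 0 ≤ ∑ i : Fin N, (∑ a, h i a * x (i,a))^2 :=
      Finset.sum_nonneg fun i _ => h2nonneg i
    have hz1 : ∑ a : Fin m, (1/2) * ∑ i, ∑ j, w i j * (x (i,a) - x (j,a))^2 = 0 := by
      linarith
    have hz2 : ∑ i : Fin N, (∑ a, h i a * x (i,a))^2 = 0 := by linarith
    -- each h i ⬝ x_i = 0
    have hdot : ∀ i, ∑ a, h i a * x (i,a) = 0 := by
      intro i
      have := (Finset.sum_eq_zero_iff_of_nonneg (fun i _ => h2nonneg i)).mp hz2 i
        (Finset.mem_univ i)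
      exact pow_eq_zero_iff (n := 2) (by norm_num) |>.mp this
    -- adjacent nodes have equal components
    have hadjeq : ∀ i j, G.Adj i j → ∀ a, x (i,a) = x (j,a) := by
      intro i j hij a
      obtain ⟨-, hw⟩ := (hG i j).mp hij
      have ha := (Finset.sum_eq_zero_iff_of_nonneg (fun a _ => h1nonneg a)).mp hz1 a
        (Finset.mem_univ a)
      have hsum : ∑ i, ∑ j, w i j * (x (i,a) - x (j,a))^2 = 0 := by linarith
      have hi := (Finset.sum_eq_zero_iff_of_nonneg (fun i _ =>
        Finset.sum_nonneg fun j _ => mul_nonneg (hnonneg i j) (sq_nonneg _))).mp hsum i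
        (Finset.mem_univ i)
      have hij' := (Finset.sum_eq_zero_iff_of_nonneg (fun j _ =>
        mul_nonneg (hnonneg i j) (sq_nonneg _))).mp hi j (Finset.mem_univ j)
      have hsq : (x (i,a) - x (j,a))^2 = 0 := by
        rcases mul_eq_zero.mp hij' with h0 | h0
        · exact absurd h0 (ne_of_gt hw)
        · exact h0
      have := pow_eq_zero_iff (n := 2) (by norm_num) |>.mp hsq
      linarith [this]
    -- reachable nodes have equal components
    have hreach : ∀ i j : Fin N, ∀ a, x (i,a) = x (j,a) := by
      intro i j
      obtain ⟨p⟩ := hconn.preconnected i j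
      induction p with
      | nil => intro a; rfl
      | cons hadj' p ih => intro a; exact (hadjeq _ _ hadj' a).trans (ih a)
    -- get a nonzero entry
    obtain ⟨⟨i₀, a₀⟩, hp⟩ := Function.ne_iff.mp hx
    set c : Fin m → ℝ := fun a => x (i₀, a) with hc
    have hxall : ∀ i a, x (i, a) = c a := fun i a => hreach i i₀ a
    have hdotc : ∀ i, ∑ a, h i a * c a = 0 := by
      intro i
      rw [← hdot i]
      exact Finset.sum_congr rfl fun a _ => by rw [hxall]
    -- c is orthogonal to everything in the span
    have horth : ∀ v : Fin m → ℝ, v ∈ Submodule.span ℝ (Set.range h) →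
        ∑ a, v a * c a = 0 := by
      intro v hv
      induction hv using Submodule.span_induction with
      | mem v hv => obtain ⟨i, rfl⟩ := hv; exact hdotc i
      | zero => simp
      | add v u _ _ hv hu =>
        have e : ∑ a, (v + u) a * c a = (∑ a, v a * c a) + ∑ a, u a * c a := by
          simp [add_mul, Finset.sum_add_distrib]
        rw [e, hv, hu, add_zero]
      | smul r v _ hv =>
        have e : ∑ a, (r • v) a * c a = r * ∑ a, v a * c a := by
          simp [Finset.mul_sum, mul_assoc]
        rw [e, hv, mul_zero]
    have hcc : ∑ a, c a * c a = 0 := horth c (by rw [hspan]; trivial)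
    have hca : ∀ a, c a = 0 := by
      intro a
      have := (Finset.sum_eq_zero_iff_of_nonneg (fun a _ => mul_self_nonneg (c a))).mp hcc a
        (Finset.mem_univ a)
      exact mul_self_eq_zero.mp this
    exact hp (by rw [hxall i₀ a₀, hca a₀]; simp)
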